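/- Let E be the open unit disc in ℂ and let T be an open subset of the closed unit disc Ē. Then the relative extremal function satisfies ω(0, T ∩ E, E) ≤ (1/2π) ∫₀^{2π} 1_{∂E \ T}(e^{iθ}) dθ, i.e., the value at 0 of the relative extremal function of T ∩ E in E is at most the normalized Lebesgue measure of the part of the unit circle not covered by T. -/

import Mathlib

open Complex Metric Filter Set MeasureTheory
open scoped Topology Real Manifold

noncomputable section

/-- Plurisubharmonic (subharmonic when `V = ℂ`) real-valued function on a set
in a complex normed space: upper semicontinuous plus the sub-mean value
inequality over small circles in every complex direction. -/
def PSHOn {V : Type*} [NormedAddCommGroup V] [NormedSpace ℂ V]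
    (u : V → ℝ) (D : Set V) : Prop :=
  UpperSemicontinuousOn u D ∧
  ∀ z ∈ D, ∀ v : V, ∀ᶠ r in 𝓝[>] (0:ℝ),
    u z ≤ (1 / (2 * Real.pi)) *
      ∫ θ in (0:ℝ)..(2 * Real.pi), u (z + (Complex.ofReal r * Complex.exp (θ * Complex.I)) • v)

/-- The (unregularized) extremal function `h_{A,D}` relative to the canonical
system of approach regions. -/
def hFun {V : Type*} [NormedAddCommGroup V] [NormedSpace ℂ V]
    (A D : Set V) : V → ℝ := fun z =>
  sSup ((fun u : V → ℝ => u z) ''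
    {u | PSHOn u D ∧ (∀ x ∈ D, u x ≤ 1) ∧ ∀ a ∈ A, Filter.limsup u (𝓝[D] a) ≤ 0})

/-- The relative extremal function `ω(·, A, D)` (canonical approach regions):
the upper semicontinuous regularization of `h_{A,D}`. -/
def omegaC {V : Type*} [NormedAddCommGroup V] [NormedSpace ℂ V]
    (A D : Set V) (z : V) : ℝ :=
  Filter.limsup (hFun A D) (𝓝[D] z)

lemma intExp (n : ℤ) (hn : n ≠ 0) :
    ∫ θ in (0:ℝ)..(2*Real.pi), Complex.exp ((n:ℂ) * θ * Complex.I) = 0 := by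
  have h : ∀ θ : ℝ, (n:ℂ) * θ * Complex.I = ((n:ℂ) * Complex.I) * θ := by intro θ; ring
  simp_rw [h]
  rw [integral_exp_mul_complex (by simp [Complex.ext_iff, hn])]
  have : Complex.exp ((n:ℂ) * Complex.I * (2*Real.pi)) = 1 := by
    rw [show (n:ℂ) * Complex.I * (2*Real.pi) = n * (2 * Real.pi * Complex.I) by push_cast; ring]
    exact Complex.exp_int_mul_two_pi_mul_I n
  simp [this]

lemma contCirc (g : ℂ → ℂ) (hg : Continuous g) (z₀ : ℂ) (r : ℝ) :
    Continuous fun θ : ℝ => g (z₀ + (r:ℂ) * Complex.exp (θ * Complex.I)) := by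
  fun_prop

lemma meanPow (k : ℕ) (z₀ : ℂ) (r : ℝ) :
    ∫ θ in (0:ℝ)..(2*Real.pi), (z₀ + (r:ℂ) * Complex.exp ((θ:ℂ) * Complex.I)) ^ k
      = 2*Real.pi * z₀ ^ k := by
  have hint : ∀ j : ℕ, IntervalIntegrable
      (fun θ : ℝ => z₀ ^ j * ((r:ℂ) * Complex.exp ((θ:ℂ) * Complex.I)) ^ (k - j) * (k.choose j : ℂ))
      MeasureTheory.volume 0 (2*Real.pi) := by
    intro j
    apply Continuous.intervalIntegrable
    fun_prop
  calc ∫ θ in (0:ℝ)..(2*Real.pi), (z₀ + (r:ℂ) * Complex.exp ((θ:ℂ) * Complex.I)) ^ k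
      = ∫ θ in (0:ℝ)..(2*Real.pi), ∑ j ∈ Finset.range (k+1),
          z₀ ^ j * ((r:ℂ) * Complex.exp ((θ:ℂ) * Complex.I)) ^ (k - j) * (k.choose j : ℂ) := by
        congr 1; funext θ; rw [add_pow]
    _ = ∑ j ∈ Finset.range (k+1), ∫ θ in (0:ℝ)..(2*Real.pi),
          z₀ ^ j * ((r:ℂ) * Complex.exp ((θ:ℂ) * Complex.I)) ^ (k - j) * (k.choose j : ℂ) := by
        exact intervalIntegral.integral_finset_sum (fun j _ => hint j)
    _ = 2*Real.pi * z₀ ^ k := by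
        rw [Finset.sum_eq_single_of_mem k (Finset.self_mem_range_succ k)]
        · simp only [Nat.sub_self, pow_zero, mul_one, Nat.choose_self, Nat.cast_one,
            intervalIntegral.integral_const, smul_eq_mul]
          rw [sub_zero, Complex.real_smul]
          push_cast; ring
        · intro j hj hjk
          have hkj : 0 < k - j := Nat.sub_pos_of_lt (lt_of_le_of_ne (Nat.lt_succ_iff.mp (Finset.mem_range.mp hj)) hjk)
          have : ∀ θ : ℝ, z₀ ^ j * ((r:ℂ) * Complex.exp ((θ:ℂ) * Complex.I)) ^ (k - j) * (k.choose j : ℂ)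
              = (z₀ ^ j * (r:ℂ)^(k-j) * (k.choose j : ℂ)) * Complex.exp ((((k-j : ℕ) : ℤ) : ℂ) * θ * Complex.I) := by
            intro θ
            rw [mul_pow, ← Complex.exp_nat_mul]
            push_cast
            ring
          simp_rw [this]
          rw [intervalIntegral.integral_const_mul, intExp _ (by exact_mod_cast hkj.ne'), mul_zero]

def IsPolyLike (f : ℂ → ℂ) : Prop :=
  ∃ (s : Finset ℤ) (a : ℤ → ℂ) (m : ℤ → ℕ), f = fun z => ∑ n ∈ s, a n * z ^ m n

lemma IsPolyLike.differentiable {f : ℂ → ℂ} (hf : IsPolyLike f) : Differentiable ℂ f := by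
  obtain ⟨s, a, m, rfl⟩ := hf
  fun_prop

lemma IsPolyLike.continuous {f : ℂ → ℂ} (hf : IsPolyLike f) : Continuous f :=
  hf.differentiable.continuous

lemma IsPolyLike.mean {f : ℂ → ℂ} (hf : IsPolyLike f) (z₀ : ℂ) (r : ℝ) :
    ∫ θ in (0:ℝ)..(2*Real.pi), f (z₀ + (r:ℂ) * Complex.exp ((θ:ℂ) * Complex.I))
      = 2*Real.pi * f z₀ := by
  obtain ⟨s, a, m, rfl⟩ := hf
  rw [intervalIntegral.integral_finset_sum (fun n _ => by
    apply Continuous.intervalIntegrable; fun_prop)]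
  rw [Finset.mul_sum]
  refine Finset.sum_congr rfl fun n _ => ?_
  rw [intervalIntegral.integral_const_mul, meanPow]
  ring

lemma integralRe (F : ℝ → ℂ) (hF : Continuous F) :
    ∫ θ in (0:ℝ)..(2*Real.pi), (F θ).re = (∫ θ in (0:ℝ)..(2*Real.pi), F θ).re := by
  have h2π : (0:ℝ) ≤ 2*Real.pi := by positivity
  rw [intervalIntegral.integral_of_le h2π, intervalIntegral.integral_of_le h2π]
  simp_rw [← RCLike.re_to_complex]
  exact integral_re hF.integrableOn_Ioc

lemma IsPolyLike.meanRe {f : ℂ → ℂ} (hf : IsPolyLike f) (z₀ : ℂ) (r : ℝ) :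
    ∫ θ in (0:ℝ)..(2*Real.pi), (f (z₀ + (r:ℂ) * Complex.exp ((θ:ℂ) * Complex.I))).re
      = 2*Real.pi * (f z₀).re := by
  have hc : Continuous fun θ : ℝ => f (z₀ + (r:ℂ) * Complex.exp ((θ:ℂ) * Complex.I)) := by
    have := hf.continuous; fun_prop
  rw [integralRe _ hc, hf.mean z₀ r]
  simp [Complex.mul_re]

lemma meanNormSq (z₀ : ℂ) (r : ℝ) :
    ∫ θ in (0:ℝ)..(2*Real.pi), Complex.normSq (z₀ + (r:ℂ) * Complex.exp ((θ:ℂ) * Complex.I))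
      = 2*Real.pi * (Complex.normSq z₀ + r^2) := by
  have h : ∀ θ : ℝ, Complex.normSq (z₀ + (r:ℂ) * Complex.exp ((θ:ℂ) * Complex.I))
      = Complex.normSq z₀ + r^2 + 2 * ((z₀ * Complex.exp (-((θ:ℂ) * Complex.I))) * r).re := by
    intro θ
    rw [Complex.normSq_add]
    congr 2
    · have : ‖(Complex.exp ((θ:ℂ) * Complex.I))‖ = 1 := Complex.norm_exp_ofReal_mul_I θ
      simp [Complex.normSq_mul, Complex.normSq_eq_norm_sq, this, sq_abs]
    · congr 1
      rw [map_mul, ← Complex.exp_conj]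
      simp [Complex.conj_ofReal]
      ring
  simp_rw [h]
  rw [intervalIntegral.integral_add (by apply Continuous.intervalIntegrable; fun_prop)
    (by apply Continuous.intervalIntegrable; fun_prop)]
  have h1 : ∫ θ in (0:ℝ)..(2*Real.pi), (Complex.normSq z₀ + r^2) = 2*Real.pi * (Complex.normSq z₀ + r^2) := by
    simp; ring
  have h2 : ∫ θ in (0:ℝ)..(2*Real.pi), 2 * ((z₀ * Complex.exp (-((θ:ℂ) * Complex.I))) * r).re = 0 := by
    have : ∀ θ : ℝ, 2 * ((z₀ * Complex.exp (-((θ:ℂ) * Complex.I))) * r).re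
        = ((2 * z₀ * r) * Complex.exp (((-1 : ℤ) : ℂ) * θ * Complex.I)).re := by
      intro θ
      have e1 : ((2:ℂ)*z₀*(r:ℂ)) * Complex.exp ((((-1:ℤ)):ℂ)*(θ:ℂ)*Complex.I)
          = 2*(z₀ * Complex.exp (-((θ:ℂ)*Complex.I)) * (r:ℂ)) := by
        push_cast
        rw [show ((-1:ℂ) * (θ:ℂ) * Complex.I) = -((θ:ℂ)*Complex.I) by ring]
        ring
      rw [e1, Complex.mul_re]
      norm_num
    simp_rw [this]
    have h2π : (0:ℝ) ≤ 2*Real.pi := by positivity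
    rw [integralRe _ (by fun_prop), intervalIntegral.integral_const_mul,
      intExp (-1) (by norm_num)]
    simp
  rw [h1, h2, add_zero]

lemma fourier_approx (φ : ℂ → ℝ) (hφ : Continuous φ) (ε : ℝ) (hε : 0 < ε) :
    ∃ f : ℂ → ℂ, IsPolyLike f ∧
      ∀ θ : ℝ, |(f (Complex.exp ((θ:ℂ) * Complex.I))).re - φ (Complex.exp ((θ:ℂ) * Complex.I))| ≤ ε := by
  haveI : Fact (0 < 2*Real.pi) := ⟨by positivity⟩
  set Φ : C(AddCircle (2*Real.pi), ℂ) :=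
    ⟨fun q => ((φ ((AddCircle.toCircle q : Circle) : ℂ) : ℝ) : ℂ), by
      apply Complex.continuous_ofReal.comp
      exact hφ.comp (continuous_subtype_val.comp AddCircle.continuous_toCircle)⟩ with hΦ
  have hmem : Φ ∈ closure ((Submodule.span ℂ (Set.range (@fourier (2*Real.pi)))) : Set _) := by
    rw [← Submodule.topologicalClosure_coe, span_fourier_closure_eq_top]
    trivial
  rw [Metric.mem_closure_iff] at hmem
  obtain ⟨g, hg_mem, hg_dist⟩ := hmem ε hε
  obtain ⟨c, hc⟩ := Finsupp.mem_span_range_iff_exists_finsupp.mp hg_mem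
  refine ⟨fun z => ∑ n ∈ c.support,
    (if 0 ≤ n then c n else (starRingEnd ℂ) (c n)) * z ^ (if 0 ≤ n then n.toNat else (-n).toNat),
    ⟨c.support, _, _, rfl⟩, ?_⟩
  intro θ
  have key : (∑ n ∈ c.support,
      (if 0 ≤ n then c n else (starRingEnd ℂ) (c n)) *
        (Complex.exp ((θ:ℂ) * Complex.I)) ^ (if 0 ≤ n then n.toNat else (-n).toNat)).re
      = (g ((θ : ℝ) : AddCircle (2*Real.pi))).re := by
    have hg_eval : g ((θ : ℝ) : AddCircle (2*Real.pi))
        = ∑ n ∈ c.support, c n * Complex.exp ((n:ℂ) * (θ:ℂ) * Complex.I) := by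
      rw [← hc]
      rw [Finsupp.sum]
      rw [ContinuousMap.sum_apply]
      refine Finset.sum_congr rfl fun n _ => ?_
      rw [ContinuousMap.smul_apply, smul_eq_mul]
      congr 1
      rw [fourier_coe_apply]
      congr 1
      have h2π : (2*Real.pi : ℂ) ≠ 0 := by
        simp [Complex.ext_iff, Real.pi_ne_zero]
      field_simp
      push_cast
      ring
    rw [hg_eval, Complex.re_sum, Complex.re_sum]
    refine Finset.sum_congr rfl fun n _ => ?_
    by_cases hn : 0 ≤ n
    · simp only [hn, if_true]
      congr 2
      rw [← Complex.exp_nat_mul]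
      congr 1
      have hcast : ((n.toNat : ℂ)) = (n:ℂ) := by exact_mod_cast congrArg Int.cast (Int.toNat_of_nonneg hn)
      rw [hcast]; ring
    · simp only [hn, if_false]
      have : (Complex.exp ((θ:ℂ) * Complex.I)) ^ ((-n).toNat)
          = Complex.exp (((-n:ℤ):ℂ) * (θ:ℂ) * Complex.I) := by
        rw [← Complex.exp_nat_mul]
        congr 1
        have hcast : (((-n).toNat : ℂ)) = ((-n : ℤ):ℂ) := by
          exact_mod_cast congrArg Int.cast (Int.toNat_of_nonneg (by omega : (0:ℤ) ≤ -n))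
        rw [hcast]; push_cast; ring
      rw [this]
      have : (starRingEnd ℂ) (c n) * Complex.exp (((-n:ℤ):ℂ) * (θ:ℂ) * Complex.I)
          = (starRingEnd ℂ) (c n * Complex.exp ((n:ℂ) * (θ:ℂ) * Complex.I)) := by
        rw [map_mul, ← Complex.exp_conj]
        congr 2
        simp [Complex.ext_iff]
      rw [this, Complex.conj_re]
  rw [key]
  have hΦθ : (Φ ((θ : ℝ) : AddCircle (2*Real.pi))) = ((φ (Complex.exp ((θ:ℂ) * Complex.I)) : ℝ) : ℂ) := by
    rw [hΦ]
    simp only [ContinuousMap.coe_mk]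
    congr 2
    rw [AddCircle.toCircle_apply_mk, Circle.coe_exp]
    have h : 2*Real.pi/(2*Real.pi)*θ = θ := by
      rw [div_self (by positivity : (2*Real.pi) ≠ 0), one_mul]
    rw [h]
  calc |(g ((θ : ℝ) : AddCircle (2*Real.pi))).re - φ (Complex.exp ((θ:ℂ) * Complex.I))|
      = |(g ((θ : ℝ) : AddCircle (2*Real.pi)) - Φ ((θ : ℝ) : AddCircle (2*Real.pi))).re| := by
        rw [hΦθ]; simp [Complex.sub_re]
    _ ≤ ‖(g ((θ : ℝ) : AddCircle (2*Real.pi)) - Φ ((θ : ℝ) : AddCircle (2*Real.pi)))‖ :=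
        Complex.abs_re_le_norm _
    _ ≤ dist g Φ := by
        rw [← Complex.dist_eq]
        exact ContinuousMap.dist_apply_le_dist _
    _ ≤ ε := by rw [dist_comm] at hg_dist; exact hg_dist.le

lemma limsup_le_of_ev {α : Type*} {f : Filter α} {u : α → ℝ} {b : ℝ} (hb : 0 ≤ b)
    (h : ∀ᶠ x in f, u x ≤ b) : Filter.limsup u f ≤ b := by
  rw [Filter.limsup_eq]
  by_cases hbd : BddBelow {a | ∀ᶠ x in f, u x ≤ a}
  · exact csInf_le hbd h
  · rw [Real.sInf_of_not_bddBelow hbd]; exact hb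

lemma normSq_le_one {z : ℂ} (h : z ∈ closedBall (0:ℂ) 1) : Complex.normSq z ≤ 1 := by
  rw [mem_closedBall_zero_iff] at h
  rw [Complex.normSq_eq_norm_sq]
  nlinarith [norm_nonneg z, h]

lemma normSq_lt_one {z : ℂ} (h : z ∈ ball (0:ℂ) 1) : Complex.normSq z < 1 := by
  rw [mem_ball_zero_iff] at h
  rw [Complex.normSq_eq_norm_sq]
  nlinarith [norm_nonneg z, h]

lemma circle_mem_ball {z : ℂ} (hz : z ∈ ball (0:ℂ) 1) {r : ℝ} (hr : 0 < r)
    (hlt : r < 1 - ‖z‖) (θ : ℝ) : z + (r:ℂ) * Complex.exp ((θ:ℂ) * Complex.I) ∈ ball (0:ℂ) 1 := by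
  rw [mem_ball_zero_iff] at *
  calc ‖z + (r:ℂ) * Complex.exp ((θ:ℂ) * Complex.I)‖
      ≤ ‖z‖ + ‖(r:ℂ) * Complex.exp ((θ:ℂ) * Complex.I)‖ := norm_add_le _ _
    _ = ‖z‖ + r := by
        simp only [norm_mul, Complex.norm_real, Real.norm_eq_abs,
          Complex.norm_exp_ofReal_mul_I, mul_one]
        rw [abs_of_pos hr]
    _ < 1 := by linarith

lemma maxp (u H : ℂ → ℝ)
    (husc : UpperSemicontinuousOn u (ball (0:ℂ) 1))
    (hsub : ∀ z ∈ ball (0:ℂ) 1, ∀ᶠ r : ℝ in 𝓝[>] (0:ℝ),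
      u z ≤ (1/(2*Real.pi)) * ∫ θ in (0:ℝ)..(2*Real.pi),
        u (z + ((r:ℂ) * Complex.exp ((θ:ℂ) * Complex.I)) • (1:ℂ)))
    (hu1 : ∀ x ∈ ball (0:ℂ) 1, u x ≤ 1)
    (hH : Continuous H) (hH0 : ∀ z ∈ closedBall (0:ℂ) 1, 0 ≤ H z)
    (hHmean : ∀ (z₀ : ℂ) (r : ℝ), ∫ θ in (0:ℝ)..(2*Real.pi),
      H (z₀ + (r:ℂ) * Complex.exp ((θ:ℂ) * Complex.I)) = 2*Real.pi * H z₀)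
    (hbdry : ∀ ζ ∈ sphere (0:ℂ) 1,
      Filter.limsup (fun z => u z - H z) (𝓝[ball (0:ℂ) 1] ζ) ≤ 0) :
    ∀ p ∈ ball (0:ℂ) 1, u p ≤ H p := by
  by_contra hcon
  push_neg at hcon
  obtain ⟨p, hp, hup⟩ := hcon
  have h2π : (0:ℝ) < 2*Real.pi := by positivity
  -- minimum of H on the closed ball
  obtain ⟨w₀, hw₀, hw₀min⟩ := (isCompact_closedBall (0:ℂ) 1).exists_isMinOn
    ⟨0, by simp⟩ hH.continuousOn
  set B := H w₀ with hB
  have hBle : ∀ z ∈ closedBall (0:ℂ) 1, B ≤ H z := fun z hz => hw₀min hz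
  -- the perturbation
  have hpns : Complex.normSq p < 1 := normSq_lt_one hp
  set ε' : ℝ := (u p - H p) / (2 * (1 - Complex.normSq p)) with hε'
  have hε'pos : 0 < ε' := by
    apply div_pos (by linarith) (by linarith)
  set v : ℂ → ℝ := fun z => u z - H z + ε' * (Complex.normSq z - 1) with hv
  have hvp : 0 < v p := by
    have ht : (0:ℝ) < 1 - Complex.normSq p := by linarith
    have hkey : ε' * (1 - Complex.normSq p) = (u p - H p)/2 := by
      rw [hε', div_mul_eq_mul_div, mul_comm (u p - H p) (1 - Complex.normSq p),
        mul_comm (2:ℝ) (1 - Complex.normSq p), mul_div_mul_left _ _ ht.ne']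
    have hvpdef : v p = u p - H p + ε' * (Complex.normSq p - 1) := rfl
    have : ε' * (Complex.normSq p - 1) = -((u p - H p)/2) := by
      rw [← hkey]; ring
    rw [hvpdef, this]
    linarith
  have hvbd : BddAbove (v '' ball (0:ℂ) 1) := by
    refine ⟨1 - B, ?_⟩
    rintro y ⟨z, hz, rfl⟩
    have h1 : u z ≤ 1 := hu1 z hz
    have h2 : B ≤ H z := hBle z (ball_subset_closedBall hz)
    have h3 : ε' * (Complex.normSq z - 1) ≤ 0 :=
      mul_nonpos_of_nonneg_of_nonpos hε'pos.le (by linarith [normSq_lt_one hz])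
    have hvdef : v z = u z - H z + ε' * (Complex.normSq z - 1) := rfl
    rw [hvdef]; linarith
  set c : ℝ := sSup (v '' ball (0:ℂ) 1) with hc
  have hcpos : 0 < c := lt_of_lt_of_le hvp (le_csSup hvbd (mem_image_of_mem _ hp))
  have hvc : ∀ z ∈ ball (0:ℂ) 1, v z ≤ c := fun z hz => le_csSup hvbd (mem_image_of_mem _ hz)
  -- maximizing sequence
  have hseq : ∀ n : ℕ, ∃ z ∈ ball (0:ℂ) 1, c - 1/(n+1) < v z := by
    intro n
    obtain ⟨y, ⟨z, hz, rfl⟩, hy⟩ := exists_lt_of_lt_csSup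
      (⟨v p, mem_image_of_mem _ hp⟩ : (v '' ball (0:ℂ) 1).Nonempty)
      (show c - 1/((n:ℝ)+1) < c from sub_lt_self c (by positivity))
    exact ⟨z, hz, hy⟩
  choose z hzball hzv using hseq
  obtain ⟨zb, hzb, φi, hφmono, hφtend⟩ := (isCompact_closedBall (0:ℂ) 1).tendsto_subseq
    (fun n => ball_subset_closedBall (hzball n))
  set w : ℕ → ℂ := fun k => z (φi k) with hw
  have htendW : Tendsto w atTop (𝓝[ball (0:ℂ) 1] zb) := by
    rw [tendsto_nhdsWithin_iff]
    exact ⟨hφtend, Eventually.of_forall (fun k => hzball (φi k))⟩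
  have hlow : Tendsto (fun k : ℕ => c - 1/((k:ℝ)+1)) atTop (𝓝 c) := by
    have := tendsto_one_div_add_atTop_nhds_zero_nat (𝕜 := ℝ)
    simpa using tendsto_const_nhds.sub this
  have hvtend : Tendsto (fun k => v (w k)) atTop (𝓝 c) := by
    apply tendsto_of_tendsto_of_tendsto_of_le_of_le hlow tendsto_const_nhds
    · intro k
      have h1 : c - 1/((φi k : ℝ)+1) < v (w k) := hzv (φi k)
      have h2 : (k:ℝ) + 1 ≤ (φi k : ℝ) + 1 := by
        have h0 : k ≤ φi k := hφmono.le_apply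
        have : (k:ℝ) ≤ (φi k : ℝ) := by exact_mod_cast h0
        linarith
      have h3 : 1/((φi k:ℝ)+1) ≤ 1/((k:ℝ)+1) :=
        one_div_le_one_div_of_le (by positivity) h2
      linarith
    · exact fun k => hvc _ (hzball (φi k))
  have hzbn : ‖zb‖ ≤ 1 := mem_closedBall_zero_iff.mp hzb
  rcases lt_or_eq_of_le hzbn with hzblt | hzbeq
  · -- interior case
    have hzbball : zb ∈ ball (0:ℂ) 1 := mem_ball_zero_iff.mpr hzblt
    -- v zb = c
    have hvzb : v zb = c := by
      refine le_antisymm (hvc zb hzbball) ?_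
      by_contra hlt
      push_neg at hlt
      set d := c - v zb with hd
      have hdpos : 0 < d := by linarith
      -- eventually v x < v zb + d/2 near zb within ball
      have husc' := husc zb hzbball (u zb + d/4) (by linarith)
      have hHcont : ∀ᶠ x in 𝓝[ball (0:ℂ) 1] zb, H zb - d/4 < H x := by
        apply eventually_nhdsWithin_of_eventually_nhds
        exact (hH.continuousAt (x := zb)).eventually_const_lt (by linarith)
      have hqcont : ∀ᶠ x in 𝓝[ball (0:ℂ) 1] zb,
          ε' * (Complex.normSq x - 1) < ε' * (Complex.normSq zb - 1) + d/4 := by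
        apply eventually_nhdsWithin_of_eventually_nhds
        have hcq : Continuous fun x : ℂ => ε' * (Complex.normSq x - 1) :=
          continuous_const.mul (Complex.continuous_normSq.sub continuous_const)
        exact (hcq.continuousAt (x := zb)).eventually_lt_const (by linarith)
      have hev : ∀ᶠ x in 𝓝[ball (0:ℂ) 1] zb, v x < c - d/4 := by
        filter_upwards [husc', hHcont, hqcont] with x h1 h2 h3
        have hvx : v x = u x - H x + ε' * (Complex.normSq x - 1) := rfl
        have hvzbdef : v zb = u zb - H zb + ε' * (Complex.normSq zb - 1) := rfl
        have hddef : d = c - v zb := hd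
        rw [hvx]
        linarith
      have hev2 : ∀ᶠ k in atTop, v (w k) < c - d/4 := htendW.eventually hev
      have hev3 : ∀ᶠ k in atTop, c - d/4 < v (w k) :=
        hvtend.eventually_const_lt (by linarith)
      obtain ⟨k, h1, h2⟩ := (hev2.and hev3).exists
      linarith
    -- sub-mean value at zb
    have hmem1 : Ioo (0:ℝ) (1 - ‖zb‖) ∈ 𝓝[>] (0:ℝ) :=
      Ioo_mem_nhdsGT (by linarith)
    obtain ⟨r, hrsub, hrpos, hrlt⟩ := ((hsub zb hzbball).and hmem1).exists
    have hsmul : (fun θ:ℝ => u (zb + ((r:ℂ) * Complex.exp ((θ:ℂ) * Complex.I)) • (1:ℂ)))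
        = fun θ:ℝ => u (zb + (r:ℂ) * Complex.exp ((θ:ℂ) * Complex.I)) := by
      funext θ; simp [smul_eq_mul]
    rw [hsmul] at hrsub
    have hcirc : ∀ θ:ℝ, zb + (r:ℂ) * Complex.exp ((θ:ℂ) * Complex.I) ∈ ball (0:ℂ) 1 :=
      circle_mem_ball hzbball hrpos hrlt
    by_cases hInt : IntervalIntegrable
        (fun θ:ℝ => u (zb + (r:ℂ) * Complex.exp ((θ:ℂ) * Complex.I))) volume 0 (2*Real.pi)
    · -- integrable case : contradiction via strict submean
      set Iu := ∫ θ in (0:ℝ)..(2*Real.pi), u (zb + (r:ℂ) * Complex.exp ((θ:ℂ) * Complex.I)) with hIu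
      have hIulb : 2*Real.pi * u zb ≤ Iu := by
        calc 2*Real.pi * u zb ≤ 2*Real.pi * ((1/(2*Real.pi)) * Iu) :=
              mul_le_mul_of_nonneg_left hrsub h2π.le
          _ = Iu := by field_simp
      have hH_int : IntervalIntegrable
          (fun θ:ℝ => H (zb + (r:ℂ) * Complex.exp ((θ:ℂ) * Complex.I))) volume 0 (2*Real.pi) := by
        apply Continuous.intervalIntegrable; fun_prop
      have hq_int : IntervalIntegrable
          (fun θ:ℝ => ε' * (Complex.normSq (zb + (r:ℂ) * Complex.exp ((θ:ℂ) * Complex.I)) - 1))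
          volume 0 (2*Real.pi) := by
        apply Continuous.intervalIntegrable
        apply continuous_const.mul
        apply Continuous.sub _ continuous_const
        exact Complex.continuous_normSq.comp (by fun_prop)
      have hv_int : IntervalIntegrable
          (fun θ:ℝ => v (zb + (r:ℂ) * Complex.exp ((θ:ℂ) * Complex.I))) volume 0 (2*Real.pi) := by
        have : (fun θ:ℝ => v (zb + (r:ℂ) * Complex.exp ((θ:ℂ) * Complex.I)))
            = fun θ:ℝ => (u (zb + (r:ℂ) * Complex.exp ((θ:ℂ) * Complex.I))
              - H (zb + (r:ℂ) * Complex.exp ((θ:ℂ) * Complex.I)))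
              + ε' * (Complex.normSq (zb + (r:ℂ) * Complex.exp ((θ:ℂ) * Complex.I)) - 1) := rfl
        rw [this]
        exact (hInt.sub hH_int).add hq_int
      have hvle : (∫ θ in (0:ℝ)..(2*Real.pi), v (zb + (r:ℂ) * Complex.exp ((θ:ℂ) * Complex.I)))
          ≤ 2*Real.pi * c := by
        have := intervalIntegral.integral_mono_on h2π.le hv_int
          (intervalIntegrable_const (c := c)) (fun θ _ => hvc _ (hcirc θ))
        simpa [smul_eq_mul, mul_comm] using this
      have hveq : (∫ θ in (0:ℝ)..(2*Real.pi), v (zb + (r:ℂ) * Complex.exp ((θ:ℂ) * Complex.I)))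
          = Iu - 2*Real.pi * H zb + ε' * (2*Real.pi*(Complex.normSq zb + r^2) - 2*Real.pi) := by
        have hvfun : (fun θ:ℝ => v (zb + (r:ℂ) * Complex.exp ((θ:ℂ) * Complex.I)))
            = fun θ:ℝ => (u (zb + (r:ℂ) * Complex.exp ((θ:ℂ) * Complex.I))
              - H (zb + (r:ℂ) * Complex.exp ((θ:ℂ) * Complex.I)))
              + ε' * (Complex.normSq (zb + (r:ℂ) * Complex.exp ((θ:ℂ) * Complex.I)) - 1) := rfl
        rw [hvfun]
        rw [intervalIntegral.integral_add (hInt.sub hH_int) hq_int,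
          intervalIntegral.integral_sub hInt hH_int, hHmean zb r,
          intervalIntegral.integral_const_mul]
        have : (∫ θ in (0:ℝ)..(2*Real.pi),
            (Complex.normSq (zb + (r:ℂ) * Complex.exp ((θ:ℂ) * Complex.I)) - 1))
            = 2*Real.pi*(Complex.normSq zb + r^2) - 2*Real.pi := by
          rw [intervalIntegral.integral_sub (by
              apply Continuous.intervalIntegrable
              exact Complex.continuous_normSq.comp (by fun_prop)) (intervalIntegrable_const (c := (1:ℝ)))]
          rw [meanNormSq]
          simp [smul_eq_mul]
        rw [this, hIu]
      have hvzb' : v zb = u zb - H zb + ε' * (Complex.normSq zb - 1) := rfl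
      have hkey : 2*Real.pi * c = 2*Real.pi * u zb - 2*Real.pi * H zb
          + ε' * (2*Real.pi * Complex.normSq zb) - 2*Real.pi * ε' := by
        rw [← hvzb, hvzb']; ring
      have hfin : 2*Real.pi * c + 2*Real.pi * ε' * r^2 ≤ 2*Real.pi * c := by
        nlinarith [hvle, hveq, hIulb, hkey]
      nlinarith [mul_pos (mul_pos h2π hε'pos) (pow_pos hrpos 2)]
    · -- non-integrable case : the integral is 0 by definition, so u zb ≤ 0
      rw [intervalIntegral.integral_undef hInt] at hrsub
      have huzb : u zb ≤ 0 := by simpa using hrsub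
      have h1 : B ≤ H zb := hBle zb hzb
      have h2 : 0 ≤ H zb := hH0 zb hzb
      have h3 : ε' * (Complex.normSq zb - 1) ≤ 0 :=
        mul_nonpos_of_nonneg_of_nonpos hε'pos.le (by linarith [normSq_lt_one hzbball])
      have hvzbdef : v zb = u zb - H zb + ε' * (Complex.normSq zb - 1) := rfl
      have : v zb ≤ 0 := by rw [hvzbdef]; linarith
      linarith [hvzb ▸ this]
  · -- boundary case
    have hzbs : zb ∈ sphere (0:ℂ) 1 := by
      rw [mem_sphere_zero_iff_norm]; exact hzbeq
    have hlimsup := hbdry zb hzbs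
    have hfreq : ∃ᶠ x in 𝓝[ball (0:ℂ) 1] zb, c/2 ≤ u x - H x := by
      apply htendW.frequently
      apply Filter.Eventually.frequently
      have hev : ∀ᶠ k in atTop, c/2 < v (w k) := hvtend.eventually_const_lt (by linarith)
      filter_upwards [hev] with k hk
      have h3 : ε' * (Complex.normSq (w k) - 1) ≤ 0 :=
        mul_nonpos_of_nonneg_of_nonpos hε'pos.le
          (by linarith [normSq_lt_one (hzball (φi k))])
      have : v (w k) = u (w k) - H (w k) + ε' * (Complex.normSq (w k) - 1) := rfl
      linarith
    have hbddU : IsBoundedUnder (· ≤ ·) (𝓝[ball (0:ℂ) 1] zb) (fun z => u z - H z) := by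
      refine ⟨1 - B, ?_⟩
      rw [Filter.eventually_map]
      filter_upwards [self_mem_nhdsWithin] with x hx
      have := hu1 x hx
      have := hBle x (ball_subset_closedBall hx)
      linarith
    have := Filter.le_limsup_of_frequently_le hfreq hbddU
    linarith

lemma expI_mem_sphere (θ : ℝ) : Complex.exp ((θ:ℂ) * Complex.I) ∈ sphere (0:ℂ) 1 := by
  rw [mem_sphere_zero_iff_norm, Complex.norm_exp_ofReal_mul_I]

lemma urysohn_step (V : Set ℂ) (hV : IsOpen V) (ε : ℝ) (hε : 0 < ε) :
    ∃ φ : ℂ → ℝ, Continuous φ ∧ (∀ x, 0 ≤ φ x ∧ φ x ≤ 1) ∧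
      (∀ x ∈ sphere (0:ℂ) 1 \ (V ∩ closedBall (0:ℂ) 1), φ x = 1) ∧
      (∫ θ in (0:ℝ)..(2*Real.pi), φ (Complex.exp ((θ:ℂ) * Complex.I)))
        ≤ (∫ θ in (0:ℝ)..(2*Real.pi),
            Set.indicator (sphere (0:ℂ) 1 \ (V ∩ closedBall (0:ℂ) 1)) (fun _ => (1:ℝ))
              (Complex.exp ((θ:ℂ) * Complex.I))) + ε := by
  have h2π : (0:ℝ) < 2*Real.pi := by positivity
  set T : Set ℂ := V ∩ closedBall (0:ℂ) 1 with hT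
  set K : Set ℂ := sphere (0:ℂ) 1 \ T with hK
  set e : ℝ → ℂ := fun θ => Complex.exp ((θ:ℂ) * Complex.I) with he
  have hecont : Continuous e := by fun_prop
  set A : Set ℝ := e ⁻¹' K with hA
  have hAeq : A = (e ⁻¹' V)ᶜ := by
    ext θ
    simp only [hA, hK, hT, mem_preimage, mem_compl_iff, mem_diff, mem_inter_iff]
    have h1 : e θ ∈ sphere (0:ℂ) 1 := expI_mem_sphere θ
    have h2 : e θ ∈ closedBall (0:ℂ) 1 := sphere_subset_closedBall h1
    tauto
  have hAclosed : IsClosed A := by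
    rw [hAeq]; exact (hV.preimage hecont).isClosed_compl
  have hKcomp : IsCompact K := by
    have : K = sphere (0:ℂ) 1 ∩ Vᶜ := by
      ext x
      simp only [hK, hT, mem_diff, mem_inter_iff, mem_compl_iff]
      have hsc : x ∈ sphere (0:ℂ) 1 → x ∈ closedBall (0:ℂ) 1 :=
        fun h => sphere_subset_closedBall h
      tauto
    rw [this]
    exact (isCompact_sphere 0 1).inter_right hV.isClosed_compl
  set C : Set ℝ := A ∩ Icc 0 (2*Real.pi) with hC
  have hCcomp : IsCompact C := isCompact_Icc.inter_left hAclosed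
  have hCfin : volume C ≠ ⊤ := by
    have : volume C ≤ volume (Icc (0:ℝ) (2*Real.pi)) := measure_mono inter_subset_right
    exact (lt_of_le_of_lt this (by rw [Real.volume_Icc]; exact ENNReal.ofReal_lt_top)).ne
  -- outer regularity
  obtain ⟨O₀, hO₀sub, hO₀open, hO₀lt⟩ := C.exists_isOpen_lt_of_lt
    (volume C + ENNReal.ofReal ε)
    (ENNReal.lt_add_right hCfin (ENNReal.ofReal_pos.mpr hε).ne')
  set O : Set ℝ := O₀ ∩ Ioo (-1) (2*Real.pi+1) with hO
  have hOopen : IsOpen O := hO₀open.inter isOpen_Ioo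
  have hCO : C ⊆ O := by
    intro θ hθ
    exact ⟨hO₀sub hθ, by have := hθ.2; constructor <;> [linarith [this.1]; linarith [this.2]]⟩
  have hOlt : volume O < volume C + ENNReal.ofReal ε :=
    lt_of_le_of_lt (measure_mono inter_subset_left) hO₀lt
  -- the compact set L and open set W ⊇ K
  set L : Set ℂ := e '' (Icc 0 (2*Real.pi) ∩ Oᶜ) with hL
  have hLcomp : IsCompact L := (isCompact_Icc.inter_right hOopen.isClosed_compl).image hecont
  have hKL : Disjoint K L := by
    rw [Set.disjoint_left]
    rintro x hxK ⟨θ, ⟨hθIcc, hθO⟩, rfl⟩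
    exact hθO (hCO ⟨hxK, hθIcc⟩)
  obtain ⟨φc, hφ1, hφ0, _, hφrange⟩ :=
    exists_continuous_one_zero_of_isCompact hKcomp hLcomp.isClosed hKL
  refine ⟨⇑φc, φc.continuous, fun x => ⟨(hφrange x).1, (hφrange x).2⟩, ?_, ?_⟩
  · exact fun x hx => hφ1 hx
  -- the integral estimate
  have hind : ∀ θ : ℝ, Set.indicator K (fun _ => (1:ℝ)) (e θ)
      = Set.indicator A (fun _ => (1:ℝ)) θ := by
    intro θ
    by_cases hθ : θ ∈ A
    · rw [Set.indicator_of_mem hθ, Set.indicator_of_mem (by exact hθ)]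
    · rw [Set.indicator_of_notMem hθ, Set.indicator_of_notMem (by exact hθ)]
  have hptwise : ∀ θ ∈ Icc (0:ℝ) (2*Real.pi),
      φc (e θ) ≤ Set.indicator O (fun _ => (1:ℝ)) θ := by
    intro θ hθ
    by_cases hθO : θ ∈ O
    · rw [Set.indicator_of_mem hθO]; exact (hφrange _).2
    · have : e θ ∈ L := ⟨θ, ⟨hθ, hθO⟩, rfl⟩
      have h0 : φc (e θ) = 0 := hφ0 this
      rw [Set.indicator_of_notMem hθO, h0]
  have hOint : IntervalIntegrable (Set.indicator O (fun _ => (1:ℝ))) volume 0 (2*Real.pi) := by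
    rw [intervalIntegrable_iff_integrableOn_Ioc_of_le h2π.le]
    rw [IntegrableOn, integrable_indicator_iff hOopen.measurableSet]
    refine (integrableOn_const_iff (by simp)).mpr (Or.inr ?_)
    rw [Measure.restrict_apply hOopen.measurableSet]
    exact lt_of_le_of_lt (measure_mono inter_subset_right)
      (by rw [Real.volume_Ioc]; exact ENNReal.ofReal_lt_top)
  have hAint : IntervalIntegrable (Set.indicator A (fun _ => (1:ℝ))) volume 0 (2*Real.pi) := by
    rw [intervalIntegrable_iff_integrableOn_Ioc_of_le h2π.le]
    rw [IntegrableOn, integrable_indicator_iff hAclosed.measurableSet]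
    refine (integrableOn_const_iff (by simp)).mpr (Or.inr ?_)
    rw [Measure.restrict_apply hAclosed.measurableSet]
    exact lt_of_le_of_lt (measure_mono inter_subset_right)
      (by rw [Real.volume_Ioc]; exact ENNReal.ofReal_lt_top)
  have step1 : (∫ θ in (0:ℝ)..(2*Real.pi), φc (e θ))
      ≤ ∫ θ in (0:ℝ)..(2*Real.pi), Set.indicator O (fun _ => (1:ℝ)) θ := by
    apply intervalIntegral.integral_mono_on h2π.le _ hOint hptwise
    apply Continuous.intervalIntegrable
    exact φc.continuous.comp hecont
  have step2 : (∫ θ in (0:ℝ)..(2*Real.pi), Set.indicator O (fun _ => (1:ℝ)) θ)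
      = (volume (O ∩ Ioc 0 (2*Real.pi))).toReal := by
    rw [intervalIntegral.integral_of_le h2π.le, MeasureTheory.integral_indicator hOopen.measurableSet,
      MeasureTheory.setIntegral_const, measureReal_restrict_apply hOopen.measurableSet]
    simp [measureReal_def]
  have step3 : (∫ θ in (0:ℝ)..(2*Real.pi), Set.indicator A (fun _ => (1:ℝ)) θ)
      = (volume (A ∩ Ioc 0 (2*Real.pi))).toReal := by
    rw [intervalIntegral.integral_of_le h2π.le, MeasureTheory.integral_indicator hAclosed.measurableSet,
      MeasureTheory.setIntegral_const, measureReal_restrict_apply hAclosed.measurableSet]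
    simp [measureReal_def]
  have hCIoc : volume C ≤ volume (A ∩ Ioc 0 (2*Real.pi)) := by
    have hsub : C ⊆ (A ∩ Ioc 0 (2*Real.pi)) ∪ {0} := by
      rintro θ ⟨hθA, hθlo, hθhi⟩
      rcases eq_or_lt_of_le hθlo with h0 | h0
      · right; simp [← h0]
      · left; exact ⟨hθA, h0, hθhi⟩
    calc volume C ≤ volume ((A ∩ Ioc 0 (2*Real.pi)) ∪ {0}) := measure_mono hsub
      _ ≤ volume (A ∩ Ioc 0 (2*Real.pi)) + volume ({0} : Set ℝ) := measure_union_le _ _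
      _ = volume (A ∩ Ioc 0 (2*Real.pi)) := by simp
  have hfin2 : volume (A ∩ Ioc 0 (2*Real.pi)) ≠ ⊤ := by
    refine (lt_of_le_of_lt (measure_mono inter_subset_right) ?_).ne
    rw [Real.volume_Ioc]; exact ENNReal.ofReal_lt_top
  -- final chain
  have hmain : (volume (O ∩ Ioc 0 (2*Real.pi))).toReal
      ≤ (volume (A ∩ Ioc 0 (2*Real.pi))).toReal + ε := by
    have h1 : volume (O ∩ Ioc 0 (2*Real.pi)) ≤ volume C + ENNReal.ofReal ε :=
      le_of_lt (lt_of_le_of_lt (measure_mono inter_subset_left) hOlt)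
    have h2 : volume C + ENNReal.ofReal ε
        ≤ volume (A ∩ Ioc 0 (2*Real.pi)) + ENNReal.ofReal ε := by
      exact add_le_add_left hCIoc _
    have h3 := le_trans h1 h2
    have h4 : (volume (O ∩ Ioc 0 (2*Real.pi))).toReal
        ≤ (volume (A ∩ Ioc 0 (2*Real.pi)) + ENNReal.ofReal ε).toReal := by
      exact ENNReal.toReal_mono (ENNReal.add_ne_top.mpr ⟨hfin2, ENNReal.ofReal_ne_top⟩) h3
    rwa [ENNReal.toReal_add hfin2 ENNReal.ofReal_ne_top, ENNReal.toReal_ofReal hε.le] at h4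
  have hindeq : (∫ θ in (0:ℝ)..(2*Real.pi),
      Set.indicator K (fun _ => (1:ℝ)) (e θ))
      = ∫ θ in (0:ℝ)..(2*Real.pi), Set.indicator A (fun _ => (1:ℝ)) θ := by
    apply intervalIntegral.integral_congr
    intro θ _
    exact hind θ
  calc (∫ θ in (0:ℝ)..(2*Real.pi), φc (e θ))
      ≤ ∫ θ in (0:ℝ)..(2*Real.pi), Set.indicator O (fun _ => (1:ℝ)) θ := step1
    _ = (volume (O ∩ Ioc 0 (2*Real.pi))).toReal := step2
    _ ≤ (volume (A ∩ Ioc 0 (2*Real.pi))).toReal + ε := hmain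
    _ = (∫ θ in (0:ℝ)..(2*Real.pi), Set.indicator A (fun _ => (1:ℝ)) θ) + ε := by rw [step3]
    _ = (∫ θ in (0:ℝ)..(2*Real.pi), Set.indicator K (fun _ => (1:ℝ)) (e θ)) + ε := by
        rw [hindeq]

/-- Lemma 1 of the paper: for `E` the open unit disc and `T` an
open subset of the closed unit disc, `ω(0, T ∩ E, E)` is at most the normalized
arclength measure of the part of the unit circle not covered by `T`. -/
theorem relative_extremal_le_circle_measure
    (T : Set ℂ) (hT : ∃ V : Set ℂ, IsOpen V ∧ T = V ∩ closedBall (0:ℂ) 1) :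
    omegaC (T ∩ ball (0:ℂ) 1) (ball (0:ℂ) 1) 0 ≤
      (1 / (2 * Real.pi)) * ∫ θ in (0:ℝ)..(2 * Real.pi),
        Set.indicator (sphere (0:ℂ) 1 \ T) (fun _ => (1:ℝ))
          (Complex.exp (θ * Complex.I)) := by
  obtain ⟨V, hV, rfl⟩ := hT
  set T : Set ℂ := V ∩ closedBall (0:ℂ) 1 with hTdef
  have h2π : (0:ℝ) < 2*Real.pi := by positivity
  set IA : ℝ := ∫ θ in (0:ℝ)..(2 * Real.pi),
    Set.indicator (sphere (0:ℂ) 1 \ T) (fun _ => (1:ℝ)) (Complex.exp ((θ:ℂ) * Complex.I)) with hIA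
  set m : ℝ := (1 / (2 * Real.pi)) * IA with hm
  have hIA0 : 0 ≤ IA := by
    rw [hIA]
    apply intervalIntegral.integral_nonneg h2π.le
    intro θ _
    exact Set.indicator_nonneg (fun _ _ => zero_le_one) _
  have hm0 : 0 ≤ m := by positivity
  show omegaC (T ∩ ball (0:ℂ) 1) (ball (0:ℂ) 1) 0 ≤ m
  refine le_of_forall_pos_le_add (fun δ hδ => ?_)
  set ε : ℝ := δ/8 with hεdef
  have hε : 0 < ε := by positivity
  obtain ⟨φ, hφc, hφ01, hφK, hφint⟩ := urysohn_step V hV ε hε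
  obtain ⟨f, hfpoly, hfψ⟩ := fourier_approx φ hφc ε hε
  set H : ℂ → ℝ := fun z => (f z).re + 2*ε with hH
  have hHc : Continuous H := (Complex.continuous_re.comp hfpoly.continuous).add continuous_const
  -- lower bound on Re f on the closed ball via the maximum modulus principle
  have hflow : ∀ z ∈ closedBall (0:ℂ) 1, -ε ≤ (f z).re := by
    intro z hz
    have hbound : ∀ w ∈ frontier (ball (0:ℂ) 1), ‖Complex.exp (-f w)‖ ≤ Real.exp ε := by
      intro w hw
      rw [frontier_ball (0:ℂ) one_ne_zero] at hw
      have habs : ‖w‖ = 1 := by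
        exact mem_sphere_zero_iff_norm.mp hw
      have hwe : Complex.exp ((Complex.arg w : ℂ) * Complex.I) = w := by
        have := Complex.norm_mul_exp_arg_mul_I w
        rwa [habs, Complex.ofReal_one, one_mul] at this
      have h1 : |(f w).re - φ w| ≤ ε := by
        have := hfψ (Complex.arg w)
        rwa [hwe] at this
      have h2 : 0 ≤ φ w := (hφ01 w).1
      have h3 : -ε ≤ (f w).re := by
        have := abs_le.mp h1
        linarith [this.1]
      rw [Complex.norm_exp]
      apply Real.exp_le_exp.mpr
      simp only [Complex.neg_re]
      linarith
    have hmm := Complex.norm_le_of_forall_mem_frontier_norm_le isBounded_ball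
      ((hfpoly.differentiable.neg.cexp).diffContOnCl) hbound
      (by rw [closure_ball (0:ℂ) one_ne_zero]; exact hz)
    rw [Complex.norm_exp] at hmm
    have := Real.exp_le_exp.mp hmm
    simp only [Complex.neg_re, Pi.neg_apply] at this
    linarith
  have hH0 : ∀ z ∈ closedBall (0:ℂ) 1, 0 ≤ H z := by
    intro z hz
    have := hflow z hz
    simp only [hH]
    linarith
  have hHmean : ∀ (z₀ : ℂ) (r : ℝ), ∫ θ in (0:ℝ)..(2*Real.pi),
      H (z₀ + (r:ℂ) * Complex.exp ((θ:ℂ) * Complex.I)) = 2*Real.pi * H z₀ := by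
    intro z₀ r
    simp only [hH]
    rw [intervalIntegral.integral_add (by
        apply Continuous.intervalIntegrable
        exact (Complex.continuous_re.comp hfpoly.continuous).comp (by fun_prop))
      (intervalIntegrable_const)]
    rw [hfpoly.meanRe z₀ r]
    simp [intervalIntegral.integral_const, smul_eq_mul]
    ring
  -- every admissible u is bounded by H on the ball
  have hfam : ∀ u : ℂ → ℝ, (PSHOn u (ball (0:ℂ) 1) ∧ (∀ x ∈ ball (0:ℂ) 1, u x ≤ 1) ∧
      ∀ a ∈ T ∩ ball (0:ℂ) 1, Filter.limsup u (𝓝[ball (0:ℂ) 1] a) ≤ 0) →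
      ∀ p ∈ ball (0:ℂ) 1, u p ≤ H p := by
    rintro u ⟨⟨husc, hsubm⟩, hu1, hulim⟩
    -- u ≤ 0 on T ∩ ball
    have hu0 : ∀ a ∈ T ∩ ball (0:ℂ) 1, u a ≤ 0 := by
      intro a ha
      refine le_trans ?_ (hulim a ha)
      apply Filter.le_limsup_of_frequently_le
      · refine Filter.Frequently.filter_mono ?_ (pure_le_nhdsWithin ha.2)
        simp [Filter.Frequently]
      · refine ⟨1, ?_⟩
        rw [Filter.eventually_map]
        filter_upwards [self_mem_nhdsWithin] with x hx
        exact hu1 x hx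
    apply maxp u H husc
    · intro z hz
      exact hsubm z hz 1
    · exact hu1
    · exact hHc
    · exact hH0
    · exact hHmean
    · intro ζ hζ
      by_cases hζV : ζ ∈ V
      · apply limsup_le_of_ev le_rfl
        have hVev : ∀ᶠ x in 𝓝[ball (0:ℂ) 1] ζ, x ∈ V :=
          eventually_nhdsWithin_of_eventually_nhds (hV.eventually_mem hζV)
        filter_upwards [hVev, self_mem_nhdsWithin] with x hxV hxball
        have hxT : x ∈ T ∩ ball (0:ℂ) 1 := ⟨⟨hxV, ball_subset_closedBall hxball⟩, hxball⟩
        have h1 := hu0 x hxT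
        have h2 := hH0 x (ball_subset_closedBall hxball)
        linarith
      · -- ζ ∈ sphere \ T
        have hζK : ζ ∈ sphere (0:ℂ) 1 \ T := ⟨hζ, fun h => hζV h.1⟩
        have habs : ‖ζ‖ = 1 := by
          exact mem_sphere_zero_iff_norm.mp hζ
        have hwe : Complex.exp ((Complex.arg ζ : ℂ) * Complex.I) = ζ := by
          have := Complex.norm_mul_exp_arg_mul_I ζ
          rwa [habs, Complex.ofReal_one, one_mul] at this
        have hfζ : 1 - ε ≤ (f ζ).re := by
          have h1 : |(f ζ).re - φ ζ| ≤ ε := by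
            have := hfψ (Complex.arg ζ); rwa [hwe] at this
          have h2 : φ ζ = 1 := hφK ζ hζK
          have := abs_le.mp h1
          linarith [this.1]
        have hHζ : 1 + ε ≤ H ζ := by simp only [hH]; linarith
        apply limsup_le_of_ev le_rfl
        have hHev : ∀ᶠ x in 𝓝[ball (0:ℂ) 1] ζ, H ζ - ε < H x :=
          eventually_nhdsWithin_of_eventually_nhds
            ((hHc.continuousAt (x := ζ)).eventually_const_lt (by linarith))
        filter_upwards [hHev, self_mem_nhdsWithin] with x hHx hxball
        have := hu1 x hxball
        linarith
  -- bound hFun by H on the ball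
  have hfun_le : ∀ z ∈ ball (0:ℂ) 1, hFun (T ∩ ball (0:ℂ) 1) (ball (0:ℂ) 1) z ≤ H z := by
    intro z hz
    apply Real.sSup_le
    · rintro y ⟨u, hu, rfl⟩
      exact hfam u hu z hz
    · exact hH0 z (ball_subset_closedBall hz)
  -- limsup bound
  have homega : omegaC (T ∩ ball (0:ℂ) 1) (ball (0:ℂ) 1) 0 ≤ H 0 + ε := by
    apply limsup_le_of_ev (by linarith [hH0 0 (by simp)])
    have hHev : ∀ᶠ x in 𝓝[ball (0:ℂ) 1] (0:ℂ), H x < H 0 + ε :=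
      eventually_nhdsWithin_of_eventually_nhds
        ((hHc.continuousAt (x := 0)).eventually_lt_const (by linarith))
    filter_upwards [hHev, self_mem_nhdsWithin] with x hHx hxball
    exact le_trans (hfun_le x hxball) (by linarith)
  -- estimate H 0
  have hmean0 : 2*Real.pi * (f 0).re
      = ∫ θ in (0:ℝ)..(2*Real.pi), (f (Complex.exp ((θ:ℂ) * Complex.I))).re := by
    have := hfpoly.meanRe 0 1
    simp only [Complex.ofReal_one, one_mul, zero_add] at this
    rw [← this]
  have hfint : (∫ θ in (0:ℝ)..(2*Real.pi), (f (Complex.exp ((θ:ℂ) * Complex.I))).re)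
      ≤ IA + ε + 2*Real.pi*ε := by
    have hle1 : (∫ θ in (0:ℝ)..(2*Real.pi), (f (Complex.exp ((θ:ℂ) * Complex.I))).re)
        ≤ ∫ θ in (0:ℝ)..(2*Real.pi), (φ (Complex.exp ((θ:ℂ) * Complex.I)) + ε) := by
      apply intervalIntegral.integral_mono_on h2π.le
      · apply Continuous.intervalIntegrable
        exact (Complex.continuous_re.comp hfpoly.continuous).comp (by fun_prop)
      · apply Continuous.intervalIntegrable
        exact (hφc.comp (by fun_prop)).add continuous_const
      · intro θ _
        have := abs_le.mp (hfψ θ)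
        linarith [this.2]
    have hle2 : (∫ θ in (0:ℝ)..(2*Real.pi), (φ (Complex.exp ((θ:ℂ) * Complex.I)) + ε))
        = (∫ θ in (0:ℝ)..(2*Real.pi), φ (Complex.exp ((θ:ℂ) * Complex.I))) + 2*Real.pi*ε := by
      rw [intervalIntegral.integral_add (by
          apply Continuous.intervalIntegrable
          exact hφc.comp (by fun_prop)) intervalIntegrable_const]
      simp [intervalIntegral.integral_const, smul_eq_mul]
    calc (∫ θ in (0:ℝ)..(2*Real.pi), (f (Complex.exp ((θ:ℂ) * Complex.I))).re)
        ≤ (∫ θ in (0:ℝ)..(2*Real.pi), φ (Complex.exp ((θ:ℂ) * Complex.I))) + 2*Real.pi*ε := by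
          rw [← hle2]; exact hle1
      _ ≤ IA + ε + 2*Real.pi*ε := by
          have := hφint
          rw [← hIA] at this
          linarith
  have hf0 : (f 0).re ≤ m + ε/(2*Real.pi) + ε := by
    have h1 : 2*Real.pi * (f 0).re ≤ IA + ε + 2*Real.pi*ε := by rw [hmean0]; exact hfint
    have h2 : (f 0).re ≤ (IA + ε + 2*Real.pi*ε) / (2*Real.pi) := by
      rw [le_div_iff₀ h2π]
      linarith [h1]
    calc (f 0).re ≤ (IA + ε + 2*Real.pi*ε) / (2*Real.pi) := h2
      _ = (1/(2*Real.pi)) * IA + ε/(2*Real.pi) + ε := by field_simp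
      _ = m + ε/(2*Real.pi) + ε := by rw [hm]
  have hεdiv : ε/(2*Real.pi) ≤ ε := by
    rw [div_le_iff₀ h2π]
    nlinarith [Real.pi_gt_three, hε]
  have hH0le : H 0 ≤ m + 4*ε := by
    simp only [hH]
    linarith
  calc omegaC (T ∩ ball (0:ℂ) 1) (ball (0:ℂ) 1) 0 ≤ H 0 + ε := homega
    _ ≤ m + 5*ε := by linarith
    _ ≤ m + δ := by rw [hεdef]; linarith

end
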